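/- arXiv:1101.4320 — 2 statements merged into one kernel-verified Lean document; each statement's English description precedes it below -/
import Mathlib

section
/- Let E be a nonzero complex normed space and let ‖·‖ be a c₀-norm on c₀ ⊗ E. Then for EVERY bounded linear operator T ∈ B(c₀) (not only compact ones), the operator T ⊗ id_E is bounded on (c₀ ⊗ E, ‖·‖), with operator norm exactly equal to ‖T‖. -/
open ZeroAtInfty NormedSpace TensorProduct

/-- The standard basis vector `δₙ` of `c₀ = C₀(ℕ, ℂ)`. -/
noncomputable def c0delta (n : ℕ) : C₀(ℕ, ℂ) :=
  ⟨⟨fun m => if m = n then 1 else 0, continuous_of_discreteTopology⟩, by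
    simp only [ContinuousMap.coe_mk]
    rw [Filter.cocompact_eq_cofinite ℕ]
    apply Filter.Tendsto.congr' (f₁ := fun _ => (0 : ℂ))
    · rw [Filter.eventuallyEq_iff_exists_mem]
      exact ⟨{m | m ≠ n}, by simp [Filter.mem_cofinite], fun m hm => (if_neg hm).symm⟩
    · exact tendsto_const_nhds⟩

lemma c0delta_apply (n m : ℕ) : c0delta n m = if m = n then 1 else 0 := rfl

lemma c0_norm_coord (f : C₀(ℕ, ℂ)) (k : ℕ) : ‖f k‖ ≤ ‖f‖ := by
  rw [← ZeroAtInftyContinuousMap.norm_toBCF_eq_norm]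
  exact f.toBCF.norm_coe_le_norm k

lemma c0_norm_le (f : C₀(ℕ, ℂ)) {C : ℝ} (hC : 0 ≤ C) (h : ∀ k, ‖f k‖ ≤ C) : ‖f‖ ≤ C := by
  rw [← ZeroAtInftyContinuousMap.norm_toBCF_eq_norm]
  exact (BoundedContinuousFunction.norm_le hC).2 h

lemma norm_c0delta_le (n : ℕ) : ‖c0delta n‖ ≤ 1 := by
  apply c0_norm_le _ zero_le_one
  intro k
  rw [c0delta_apply]
  split <;> simp

noncomputable def c0eval (n : ℕ) : C₀(ℕ, ℂ) →L[ℂ] ℂ :=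
  LinearMap.mkContinuous
    { toFun := fun f => f n
      map_add' := fun f g => rfl
      map_smul' := fun c f => rfl } 1
    (fun f => by simpa using c0_norm_coord f n)

lemma c0eval_apply (n : ℕ) (f : C₀(ℕ, ℂ)) : c0eval n f = f n := rfl

lemma norm_c0eval_le (n : ℕ) : ‖c0eval n‖ ≤ 1 :=
  LinearMap.mkContinuous_norm_le _ zero_le_one _

lemma isCompactOperator_smulRight (φ : C₀(ℕ, ℂ) →L[ℂ] ℂ) (g : C₀(ℕ, ℂ)) :
    IsCompactOperator (φ.smulRight g) := by
  refine ⟨(fun c : ℂ => c • g) '' Metric.closedBall 0 (‖φ‖ + 1),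
    (isCompact_closedBall 0 _).image (continuous_id.smul continuous_const), ?_⟩
  refine Filter.mem_of_superset (Metric.ball_mem_nhds 0 one_pos) ?_
  intro f hf
  refine ⟨φ f, ?_, rfl⟩
  rw [Metric.mem_closedBall, dist_zero_right]
  calc ‖φ f‖ ≤ ‖φ‖ * ‖f‖ := φ.le_opNorm f
    _ ≤ ‖φ‖ * 1 := by
        have : ‖f‖ ≤ 1 := le_of_lt (by simpa using hf)
        exact mul_le_mul_of_nonneg_left this (by positivity)
    _ ≤ ‖φ‖ + 1 := by linarith [norm_nonneg φ]

lemma c0_sum_apply {s : Finset ℕ} (g : ℕ → C₀(ℕ, ℂ)) (k : ℕ) :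
    (∑ m ∈ s, g m) k = ∑ m ∈ s, g m k := by
  classical
  induction s using Finset.induction with
  | empty => simp
  | insert _ _ h ih => rw [Finset.sum_insert h, Finset.sum_insert h,
      ZeroAtInftyContinuousMap.coe_add, Pi.add_apply, ih]

/-- truncation to the first `n` coordinates -/
noncomputable def c0trunc (n : ℕ) : C₀(ℕ, ℂ) →L[ℂ] C₀(ℕ, ℂ) :=
  ∑ m ∈ Finset.range n, (c0eval m).smulRight (c0delta m)

lemma isCompactOperator_c0trunc (n : ℕ) : IsCompactOperator (c0trunc n) := by
  induction n with
  | zero =>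
      have : (c0trunc 0 : C₀(ℕ, ℂ) → C₀(ℕ, ℂ)) = 0 := by
        ext f; simp [c0trunc]
      rw [this]; exact isCompactOperator_zero
  | succ n ih =>
      have : (c0trunc (n+1) : C₀(ℕ, ℂ) → C₀(ℕ, ℂ)) =
          (c0trunc n : C₀(ℕ, ℂ) → C₀(ℕ, ℂ)) + ((c0eval n).smulRight (c0delta n)) := by
        ext f
        simp [c0trunc, Finset.sum_range_succ]
      rw [this]
      exact ih.add (isCompactOperator_smulRight _ _)

lemma c0trunc_apply (n : ℕ) (f : C₀(ℕ, ℂ)) (k : ℕ) :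
    c0trunc n f k = if k < n then f k else 0 := by
  have h1 : c0trunc n f = ∑ m ∈ Finset.range n, (f m) • c0delta m := by
    simp [c0trunc, ContinuousLinearMap.sum_apply, c0eval_apply]
  rw [h1, c0_sum_apply]
  simp only [ZeroAtInftyContinuousMap.coe_smul, Pi.smul_apply, smul_eq_mul]
  have h3 : ∀ m, (f m) * (c0delta m k) = if m = k then f k else 0 := by
    intro m
    rw [c0delta_apply]
    by_cases h : m = k
    · subst h; simp
    · have : ¬ (k = m) := fun hk => h hk.symm
      simp [this, h]
  simp only [h3]
  rw [Finset.sum_ite_eq' (Finset.range n) k (fun _ => f k)]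
  simp [Finset.mem_range]

lemma norm_c0trunc_apply_le (n : ℕ) (g : C₀(ℕ, ℂ)) : ‖c0trunc n g‖ ≤ ‖g‖ := by
  apply c0_norm_le _ (norm_nonneg g)
  intro k
  rw [c0trunc_apply]
  split
  · exact c0_norm_coord g k
  · simp

lemma norm_c0trunc_le (n : ℕ) : ‖c0trunc n‖ ≤ 1 :=
  ContinuousLinearMap.opNorm_le_bound _ zero_le_one fun g => by
    simpa using norm_c0trunc_apply_le n g

lemma norm_sub_c0trunc (n : ℕ) (g : C₀(ℕ, ℂ)) {ε : ℝ} (hε : 0 ≤ ε)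
    (h : ∀ k, n ≤ k → ‖g k‖ ≤ ε) : ‖g - c0trunc n g‖ ≤ ε := by
  apply c0_norm_le _ hε
  intro k
  have hk : (g - c0trunc n g) k = g k - c0trunc n g k := by
    rw [ZeroAtInftyContinuousMap.coe_sub]; rfl
  rw [hk, c0trunc_apply]
  split_ifs with h'
  · simpa using hε
  · rw [sub_zero]; exact h k (not_lt.1 h')

lemma c0_tail (g : C₀(ℕ, ℂ)) {ε : ℝ} (hε : 0 < ε) : ∃ n₀, ∀ k, n₀ ≤ k → ‖g k‖ ≤ ε := by
  have h : Filter.Tendsto g (Filter.cocompact ℕ) (nhds 0) := zero_at_infty g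
  rw [Filter.cocompact_eq_cofinite] at h
  have h2 : ∀ᶠ k in Filter.cofinite, dist (g k) 0 < ε := Metric.tendsto_nhds.mp h ε hε
  rw [Filter.eventually_cofinite] at h2
  obtain ⟨n₀, hn₀⟩ := h2.bddAbove
  refine ⟨n₀ + 1, fun k hk => ?_⟩
  by_contra hcon
  have hk' : k ∈ {x | ¬ dist (g x) 0 < ε} := by
    simp only [Set.mem_setOf_eq, dist_zero_right, not_lt]
    exact le_of_not_ge hcon
  exact absurd (hn₀ hk') (by omega)

/-- if `E` is a nonzero complex normed space and `N` is a `c₀`-norm on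
`c₀ ⊗ E`, then for EVERY bounded linear operator `T ∈ B(c₀)` the operator `T ⊗ id_E` is
bounded on `(c₀ ⊗ E, N)` with norm exactly `‖T‖`: it satisfies `N((T ⊗ id)τ) ≤ ‖T‖ · N τ`,
and `‖T‖` is the least constant with this property. -/
theorem c0_norm_bounded_operators
    (E : Type*) [NormedAddCommGroup E] [NormedSpace ℂ E] [Nontrivial E]
    (N : TensorProduct ℂ C₀(ℕ, ℂ) E → ℝ)
    -- `N` is a norm:
    (N_eq_zero : ∀ τ, N τ = 0 ↔ τ = 0)
    (N_add : ∀ τ σ, N (τ + σ) ≤ N τ + N σ)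
    (N_smul : ∀ (c : ℂ) τ, N (c • τ) = ‖c‖ * N τ)
    -- `N` is a `c₀`-norm:
    (N_delta : ∀ x : E, N (c0delta 0 ⊗ₜ[ℂ] x) = ‖x‖)
    (N_compact : ∀ T : C₀(ℕ, ℂ) →L[ℂ] C₀(ℕ, ℂ), IsCompactOperator T →
      ∀ τ, N (TensorProduct.map (T : C₀(ℕ, ℂ) →ₗ[ℂ] C₀(ℕ, ℂ)) (LinearMap.id) τ) ≤ ‖T‖ * N τ) :
    ∀ T : C₀(ℕ, ℂ) →L[ℂ] C₀(ℕ, ℂ),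
      (∀ τ, N (TensorProduct.map (T : C₀(ℕ, ℂ) →ₗ[ℂ] C₀(ℕ, ℂ)) (LinearMap.id) τ) ≤ ‖T‖ * N τ) ∧
      (∀ C : ℝ, 0 ≤ C →
        (∀ τ, N (TensorProduct.map (T : C₀(ℕ, ℂ) →ₗ[ℂ] C₀(ℕ, ℂ)) (LinearMap.id) τ) ≤ C * N τ) →
        ‖T‖ ≤ C) := by
  have N_zero : N 0 = 0 := (N_eq_zero 0).mpr rfl
  have N_nonneg : ∀ τ, 0 ≤ N τ := by
    intro τ
    have hneg : N (-τ) = N τ := by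
      rw [show (-τ) = (-1 : ℂ) • τ from (neg_one_smul ℂ τ).symm, N_smul]
      simp
    have h := N_add τ (-τ)
    have hsum : τ + -τ = 0 := by abel
    rw [hsum, N_zero, hneg] at h
    linarith
  -- cross norm upper bound
  have crossU : ∀ (g : C₀(ℕ, ℂ)) (x : E), N (g ⊗ₜ[ℂ] x) ≤ ‖g‖ * ‖x‖ := by
    intro g x
    have hS := N_compact ((c0eval 0).smulRight g) (isCompactOperator_smulRight _ _)
      (c0delta 0 ⊗ₜ[ℂ] x)
    rw [N_delta] at hS
    have hmap : TensorProduct.map (((c0eval 0).smulRight g : C₀(ℕ, ℂ) →L[ℂ] C₀(ℕ, ℂ)) :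
        C₀(ℕ, ℂ) →ₗ[ℂ] C₀(ℕ, ℂ)) LinearMap.id (c0delta 0 ⊗ₜ[ℂ] x) = g ⊗ₜ[ℂ] x := by
      rw [TensorProduct.map_tmul]
      congr 1
      show (c0eval 0) (c0delta 0) • g = g
      rw [c0eval_apply, c0delta_apply]
      simp
    rw [hmap] at hS
    refine hS.trans ?_
    rw [ContinuousLinearMap.norm_smulRight_apply]
    have h1 : ‖c0eval 0‖ * ‖g‖ ≤ 1 * ‖g‖ :=
      mul_le_mul_of_nonneg_right (norm_c0eval_le 0) (norm_nonneg g)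
    rw [one_mul] at h1
    exact mul_le_mul_of_nonneg_right h1 (norm_nonneg x)
  -- cross norm lower bound
  have crossL : ∀ (g : C₀(ℕ, ℂ)) (x : E), ‖g‖ * ‖x‖ ≤ N (g ⊗ₜ[ℂ] x) := by
    intro g x
    rcases eq_or_ne x 0 with rfl | hx
    · simp only [norm_zero, mul_zero, TensorProduct.tmul_zero]
      exact (N_nonneg _)
    have hcoord : ∀ k, ‖g k‖ * ‖x‖ ≤ N (g ⊗ₜ[ℂ] x) := by
      intro k
      have hR := N_compact ((c0eval k).smulRight (c0delta 0))
        (isCompactOperator_smulRight _ _) (g ⊗ₜ[ℂ] x)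
      have hmap : TensorProduct.map (((c0eval k).smulRight (c0delta 0) :
          C₀(ℕ, ℂ) →L[ℂ] C₀(ℕ, ℂ)) : C₀(ℕ, ℂ) →ₗ[ℂ] C₀(ℕ, ℂ)) LinearMap.id (g ⊗ₜ[ℂ] x)
          = (g k) • (c0delta 0 ⊗ₜ[ℂ] x) := by
        rw [TensorProduct.map_tmul]
        show ((c0eval k) g • c0delta 0) ⊗ₜ[ℂ] (LinearMap.id x) = _
        rw [TensorProduct.smul_tmul']
        rfl
      rw [hmap, N_smul, N_delta] at hR
      have hRn : ‖(c0eval k).smulRight (c0delta 0)‖ ≤ 1 := by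
        rw [ContinuousLinearMap.norm_smulRight_apply]
        calc ‖c0eval k‖ * ‖c0delta 0‖ ≤ 1 * 1 :=
              mul_le_mul (norm_c0eval_le k) (norm_c0delta_le 0) (norm_nonneg _) zero_le_one
          _ = 1 := one_mul 1
      calc ‖g k‖ * ‖x‖ ≤ ‖(c0eval k).smulRight (c0delta 0)‖ * N (g ⊗ₜ[ℂ] x) := hR
        _ ≤ 1 * N (g ⊗ₜ[ℂ] x) := mul_le_mul_of_nonneg_right hRn (N_nonneg _)
        _ = N (g ⊗ₜ[ℂ] x) := one_mul _
    have hx' : 0 < ‖x‖ := norm_pos_iff.2 hx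
    have hle : ‖g‖ ≤ N (g ⊗ₜ[ℂ] x) / ‖x‖ := by
      apply c0_norm_le _ (div_nonneg (N_nonneg _) hx'.le)
      intro k
      rw [le_div_iff₀ hx']
      exact hcoord k
    calc ‖g‖ * ‖x‖ ≤ (N (g ⊗ₜ[ℂ] x) / ‖x‖) * ‖x‖ := mul_le_mul_of_nonneg_right hle hx'.le
      _ = N (g ⊗ₜ[ℂ] x) := div_mul_cancel₀ _ hx'.ne'
  intro T
  constructor
  · -- part 1: bound by ‖T‖
    intro τ
    refine le_of_forall_pos_le_add ?_
    intro ε hε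
    have approx : ∀ σ : TensorProduct ℂ C₀(ℕ, ℂ) E, ∀ δ : ℝ, 0 < δ → ∃ n₀ : ℕ, ∀ n, n₀ ≤ n →
        N (TensorProduct.map ((T - (c0trunc n).comp T : C₀(ℕ, ℂ) →L[ℂ] C₀(ℕ, ℂ)) :
          C₀(ℕ, ℂ) →ₗ[ℂ] C₀(ℕ, ℂ)) LinearMap.id σ) ≤ δ := by
      intro σ
      induction σ using TensorProduct.induction_on with
      | zero =>
          intro δ hδ
          exact ⟨0, fun n _ => by rw [map_zero, N_zero]; exact hδ.le⟩
      | tmul f x =>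
          intro δ hδ
          have hδ' : 0 < δ / (‖x‖ + 1) := div_pos hδ (by positivity)
          obtain ⟨n₀, hn₀⟩ := c0_tail (T f) hδ'
          refine ⟨n₀, fun n hn => ?_⟩
          have hmap : TensorProduct.map ((T - (c0trunc n).comp T : C₀(ℕ, ℂ) →L[ℂ] C₀(ℕ, ℂ)) :
              C₀(ℕ, ℂ) →ₗ[ℂ] C₀(ℕ, ℂ)) LinearMap.id (f ⊗ₜ[ℂ] x)
              = (T f - c0trunc n (T f)) ⊗ₜ[ℂ] x := by
            rw [TensorProduct.map_tmul]
            rfl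
          rw [hmap]
          refine (crossU _ _).trans ?_
          have hnorm : ‖T f - c0trunc n (T f)‖ ≤ δ / (‖x‖ + 1) := by
            apply norm_sub_c0trunc n (T f) hδ'.le
            intro k hk
            exact hn₀ k (le_trans hn hk)
          calc ‖T f - c0trunc n (T f)‖ * ‖x‖ ≤ (δ / (‖x‖ + 1)) * ‖x‖ :=
                mul_le_mul_of_nonneg_right hnorm (norm_nonneg x)
            _ ≤ (δ / (‖x‖ + 1)) * (‖x‖ + 1) := by
                apply mul_le_mul_of_nonneg_left (by linarith) hδ'.le
            _ = δ := div_mul_cancel₀ _ (by positivity)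
      | add σ₁ σ₂ ih₁ ih₂ =>
          intro δ hδ
          obtain ⟨n₁, h1⟩ := ih₁ (δ / 2) (by linarith)
          obtain ⟨n₂, h2⟩ := ih₂ (δ / 2) (by linarith)
          refine ⟨max n₁ n₂, fun n hn => ?_⟩
          rw [map_add]
          calc N _ ≤ N _ + N _ := N_add _ _
            _ ≤ δ / 2 + δ / 2 :=
                add_le_add (h1 n (le_trans (le_max_left _ _) hn))
                  (h2 n (le_trans (le_max_right _ _) hn))
            _ = δ := by ring
    obtain ⟨n₀, hn⟩ := approx τ ε hε
    set S : C₀(ℕ, ℂ) →L[ℂ] C₀(ℕ, ℂ) := (c0trunc n₀).comp T with hSdef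
    have hsplit : (T : C₀(ℕ, ℂ) →ₗ[ℂ] C₀(ℕ, ℂ))
        = (S : C₀(ℕ, ℂ) →ₗ[ℂ] C₀(ℕ, ℂ))
          + ((T - S : C₀(ℕ, ℂ) →L[ℂ] C₀(ℕ, ℂ)) : C₀(ℕ, ℂ) →ₗ[ℂ] C₀(ℕ, ℂ)) := by
      rw [ContinuousLinearMap.coe_sub]
      abel
    have hτ : TensorProduct.map (T : C₀(ℕ, ℂ) →ₗ[ℂ] C₀(ℕ, ℂ)) LinearMap.id τ
        = TensorProduct.map (S : C₀(ℕ, ℂ) →ₗ[ℂ] C₀(ℕ, ℂ)) LinearMap.id τ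
          + TensorProduct.map ((T - S : C₀(ℕ, ℂ) →L[ℂ] C₀(ℕ, ℂ)) :
              C₀(ℕ, ℂ) →ₗ[ℂ] C₀(ℕ, ℂ)) LinearMap.id τ := by
      rw [hsplit, TensorProduct.map_add_left, LinearMap.add_apply]
    have hScompact : IsCompactOperator S := (isCompactOperator_c0trunc n₀).comp_clm T
    have hSN : N (TensorProduct.map (S : C₀(ℕ, ℂ) →ₗ[ℂ] C₀(ℕ, ℂ)) LinearMap.id τ)
        ≤ ‖S‖ * N τ := N_compact S hScompact τ
    have hSnorm : ‖S‖ ≤ ‖T‖ := by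
      refine le_trans (ContinuousLinearMap.opNorm_comp_le _ _) ?_
      calc ‖c0trunc n₀‖ * ‖T‖ ≤ 1 * ‖T‖ :=
            mul_le_mul_of_nonneg_right (norm_c0trunc_le n₀) (norm_nonneg T)
        _ = ‖T‖ := one_mul _
    rw [hτ]
    calc N _ ≤ N _ + N _ := N_add _ _
      _ ≤ ‖S‖ * N τ + ε := add_le_add hSN (hn n₀ le_rfl)
      _ ≤ ‖T‖ * N τ + ε := by
          have := mul_le_mul_of_nonneg_right hSnorm (N_nonneg τ)
          linarith
  · -- part 2: ‖T‖ is least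
    intro C hC hbound
    refine T.opNorm_le_bound hC fun f => ?_
    obtain ⟨x, hx⟩ := exists_ne (0 : E)
    have hx' : 0 < ‖x‖ := norm_pos_iff.2 hx
    have h1 : ‖T f‖ * ‖x‖ ≤ N ((T f) ⊗ₜ[ℂ] x) := crossL _ _
    have h2 : N ((T f) ⊗ₜ[ℂ] x) ≤ C * N (f ⊗ₜ[ℂ] x) := by
      have h := hbound (f ⊗ₜ[ℂ] x)
      rwa [TensorProduct.map_tmul] at h
    have h3 : N (f ⊗ₜ[ℂ] x) ≤ ‖f‖ * ‖x‖ := crossU _ _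
    have h4 : ‖T f‖ * ‖x‖ ≤ (C * ‖f‖) * ‖x‖ := by
      calc ‖T f‖ * ‖x‖ ≤ C * N (f ⊗ₜ[ℂ] x) := le_trans h1 h2
        _ ≤ C * (‖f‖ * ‖x‖) := mul_le_mul_of_nonneg_left h3 hC
        _ = (C * ‖f‖) * ‖x‖ := by ring
    exact (mul_le_mul_iff_left₀ hx').mp h4
end

section
/- Let E be a complex Banach space equipped with a multi-norm, and equip ℓ¹ with its minimum multi-norm. Assume that every multi-bounded operator T ∈ B(ℓ¹, E) (i.e. every bounded T with ‖T‖_mb = sup_k ‖T^{(k)}‖ < ∞) is weakly compact. Then every multi-bounded subset of E is relatively weakly compact (its closure in the weak topology of E is compact). -/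
set_option maxHeartbeats 1000000

open NormedSpace Topology Filter


open scoped ENNReal

/-- A multi-norm based on a complex normed space `E`: a sequence of norms `‖·‖ₙ` on `Eⁿ`
agreeing with the norm of `E` at level 1 and satisfying axioms (A1)-(A4). -/
structure MultiNorm (E : Type*) [NormedAddCommGroup E] [NormedSpace ℂ E] where
  toFun : (n : ℕ) → (Fin n → E) → ℝ
  eq_zero_iff : ∀ (n : ℕ) (x : Fin n → E), toFun n x = 0 ↔ x = 0
  add_le : ∀ (n : ℕ) (x y : Fin n → E), toFun n (x + y) ≤ toFun n x + toFun n y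
  smul_eq : ∀ (n : ℕ) (c : ℂ) (x : Fin n → E), toFun n (c • x) = ‖c‖ * toFun n x
  level_one : ∀ x : E, toFun 1 (fun _ => x) = ‖x‖
  perm : ∀ (n : ℕ) (σ : Equiv.Perm (Fin n)) (x : Fin n → E), toFun n (x ∘ σ) = toFun n x
  scal : ∀ (n : ℕ) (α : Fin n → ℂ) (x : Fin n → E),
    toFun n (fun i => α i • x i) ≤ (⨆ i, ‖α i‖) * toFun n x
  drop : ∀ (n : ℕ) (x : Fin n → E), toFun (n + 1) (Fin.snoc x 0) = toFun n x
  dup : ∀ (n : ℕ) (x : Fin (n + 1) → E),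
    toFun (n + 2) (Fin.snoc x (x (Fin.last n))) = toFun (n + 1) x

/-- The multi-bound `mb(B) ∈ [0,∞]` of a subset `B` of a multi-normed space. -/
noncomputable def MultiNorm.mbSet {E : Type*} [NormedAddCommGroup E] [NormedSpace ℂ E]
    (M : MultiNorm E) (B : Set E) : ℝ≥0∞ :=
  ⨆ (n : ℕ) (x : Fin n → E) (_ : ∀ i, x i ∈ B), ENNReal.ofReal (M.toFun n x)

namespace MultiNorm

variable {E : Type*} [NormedAddCommGroup E] [NormedSpace ℂ E] (M : MultiNorm E)

lemma toFun_zero (n : ℕ) : M.toFun n 0 = 0 := (M.eq_zero_iff n 0).2 rfl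

lemma toFun_neg (n : ℕ) (x : Fin n → E) : M.toFun n (-x) = M.toFun n x := by
  have h := M.smul_eq n (-1) x
  simpa using h

lemma nonneg (n : ℕ) (x : Fin n → E) : 0 ≤ M.toFun n x := by
  have h := M.add_le n x (-x)
  rw [add_neg_cancel, M.toFun_zero, M.toFun_neg] at h
  linarith

lemma smul_real (n : ℕ) (t : ℝ) (x : Fin n → E) : M.toFun n (t • x) = |t| * M.toFun n x := by
  have hc : (t : ℂ) • x = t • x := by
    funext i
    simp [Pi.smul_apply]
  rw [← hc, M.smul_eq]
  simp

lemma const_tuple (n : ℕ) (u : E) : M.toFun (n + 1) (fun _ => u) = ‖u‖ := by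
  induction n with
  | zero => exact M.level_one u
  | succ n ih =>
    have h : (fun _ : Fin (n + 2) => u) =
        Fin.snoc (fun _ : Fin (n + 1) => u) ((fun _ : Fin (n + 1) => u) (Fin.last n)) := by
      funext i
      induction i using Fin.lastCases <;> simp
    rw [h, M.dup]
    exact ih

lemma single_le (n : ℕ) (i : Fin n) (u : E) :
    M.toFun n (fun j => if j = i then u else 0) ≤ ‖u‖ := by
  cases n with
  | zero => exact i.elim0
  | succ m =>
    have h : (fun j : Fin (m + 1) => if j = i then u else 0) =
        (fun j : Fin (m + 1) => (if j = i then (1 : ℂ) else 0) • u) := by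
      funext j
      split <;> simp
    rw [h]
    calc M.toFun (m + 1) (fun j => (if j = i then (1 : ℂ) else 0) • (fun _ => u) j)
        ≤ (⨆ j : Fin (m + 1), ‖if j = i then (1 : ℂ) else 0‖) * M.toFun (m + 1) (fun _ => u) :=
          M.scal (m + 1) _ _
      _ ≤ 1 * ‖u‖ := by
          rw [M.const_tuple]
          refine mul_le_mul ?_ le_rfl (norm_nonneg u) zero_le_one
          refine Real.iSup_le (fun j => ?_) zero_le_one
          split <;> simp
      _ = ‖u‖ := one_mul _

lemma sum_le {ι : Type*} (n : ℕ) (s : Finset ι) (g : ι → Fin n → E) :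
    M.toFun n (∑ i ∈ s, g i) ≤ ∑ i ∈ s, M.toFun n (g i) := by
  classical
  induction s using Finset.induction with
  | empty => simp [M.toFun_zero]
  | insert _ _ hx ih =>
    rw [Finset.sum_insert hx, Finset.sum_insert hx]
    exact (M.add_le n _ _).trans (by linarith)

lemma le_sum_norm (n : ℕ) (x : Fin n → E) : M.toFun n x ≤ ∑ i, ‖x i‖ := by
  classical
  have hx : x = ∑ i : Fin n, (fun j => if j = i then x i else 0) := by
    funext j
    rw [Finset.sum_apply]
    simp
  calc M.toFun n x = M.toFun n (∑ i : Fin n, fun j => if j = i then x i else 0) := by rw [← hx]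
    _ ≤ ∑ i : Fin n, M.toFun n (fun j => if j = i then x i else 0) := M.sum_le n _ _
    _ ≤ ∑ i, ‖x i‖ := Finset.sum_le_sum fun i _ => M.single_le n i (x i)

lemma le_add_sum_norm (n : ℕ) (x y : Fin n → E) :
    M.toFun n x ≤ M.toFun n y + ∑ i, ‖x i - y i‖ := by
  have h : y + (x - y) = x := by abel
  calc M.toFun n x = M.toFun n (y + (x - y)) := by rw [h]
    _ ≤ M.toFun n y + M.toFun n (x - y) := M.add_le n _ _
    _ ≤ M.toFun n y + ∑ i, ‖x i - y i‖ := by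
        have := M.le_sum_norm n (x - y)
        simpa using this


section KeyEstimate

variable {B : Set E}

lemma tuple_le (hB : M.mbSet B < ⊤) (k : ℕ) (b : Fin k → E) (hb : ∀ i, b i ∈ B) :
    M.toFun k b ≤ (M.mbSet B).toReal := by
  have h1 : ENNReal.ofReal (M.toFun k b) ≤ M.mbSet B := by
    refine le_iSup_of_le k (le_iSup_of_le b (le_iSup_of_le hb le_rfl))
  have h2 := ENNReal.toReal_mono hB.ne h1
  rwa [ENNReal.toReal_ofReal (M.nonneg k b)] at h2

lemma elem_le (hB : M.mbSet B < ⊤) (k : ℕ) (β : Fin k → ℂ) (b : Fin k → E)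
    (hβ : ∀ i, ‖β i‖ ≤ 1) (hb : ∀ i, b i ∈ B) :
    M.toFun k (fun i => β i • b i) ≤ (M.mbSet B).toReal := by
  calc M.toFun k (fun i => β i • b i) ≤ (⨆ i, ‖β i‖) * M.toFun k b := M.scal k β b
    _ ≤ 1 * (M.mbSet B).toReal :=
        mul_le_mul (Real.iSup_le hβ zero_le_one) (M.tuple_le hB k b hb) (M.nonneg k b) zero_le_one
    _ = (M.mbSet B).toReal := one_mul _

lemma convex_comb (k : ℕ) (y : Fin k → E) (i : Fin k) {m : ℕ} (t : Fin m → ℝ) (w : Fin m → E)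
    (ht0 : ∀ s, 0 ≤ t s) (ht1 : ∑ s, t s = 1) :
    M.toFun k (Function.update y i (∑ s, t s • w s)) ≤
      ∑ s, t s * M.toFun k (Function.update y i (w s)) := by
  classical
  have hdecomp : Function.update y i (∑ s, t s • w s) =
      ∑ s, t s • Function.update y i (w s) := by
    funext j
    rw [Finset.sum_apply]
    by_cases hj : j = i
    · subst hj
      simp [Function.update_self]
    · simp only [Function.update_of_ne hj, Pi.smul_apply]
      rw [← Finset.sum_smul, ht1, one_smul]
  rw [hdecomp]
  calc M.toFun k (∑ s, t s • Function.update y i (w s))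
      ≤ ∑ s, M.toFun k (t s • Function.update y i (w s)) := M.sum_le k _ _
    _ = ∑ s, t s * M.toFun k (Function.update y i (w s)) := by
        refine Finset.sum_congr rfl fun s _ => ?_
        rw [M.smul_real, abs_of_nonneg (ht0 s)]

lemma expand (hB : M.mbSet B < ⊤) (k : ℕ) (r : ℕ) (y : Fin k → E)
    (hy1 : ∀ i : Fin k, r ≤ (i : ℕ) → ∃ (β : ℂ) (b : E), ‖β‖ ≤ 1 ∧ b ∈ B ∧ y i = β • b)
    (hy2 : ∀ i : Fin k, (i : ℕ) < r →
      ∃ (m : ℕ) (t : Fin m → ℝ) (β : Fin m → ℂ) (b : Fin m → E),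
        (∀ s, 0 ≤ t s) ∧ (∑ s, t s) = 1 ∧ (∀ s, ‖β s‖ ≤ 1) ∧ (∀ s, b s ∈ B) ∧
          y i = ∑ s, t s • (β s • b s)) :
    M.toFun k y ≤ (M.mbSet B).toReal := by
  classical
  induction r generalizing y with
  | zero =>
    choose β b hβ hb hy using fun i => hy1 i (Nat.zero_le _)
    have : y = fun i => β i • b i := funext hy
    rw [this]
    exact M.elem_le hB k β b hβ hb
  | succ r ih =>
    by_cases hr : r < k
    · set i : Fin k := ⟨r, hr⟩ with hi
      obtain ⟨m, t, β, b, ht0, ht1, hβ, hb, hyi⟩ := hy2 i (by simp [hi])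
      have hupd : y = Function.update y i (∑ s, t s • (β s • b s)) := by
        rw [← hyi, Function.update_eq_self]
      rw [hupd]
      calc M.toFun k (Function.update y i (∑ s, t s • (β s • b s)))
          ≤ ∑ s, t s * M.toFun k (Function.update y i (β s • b s)) :=
            M.convex_comb k y i t _ ht0 ht1
        _ ≤ ∑ s : Fin m, t s * (M.mbSet B).toReal := by
            refine Finset.sum_le_sum fun s _ => mul_le_mul_of_nonneg_left ?_ (ht0 s)
            refine ih _ ?_ ?_
            · intro j hj
              by_cases hji : j = i
              · subst hji
                exact ⟨β s, b s, hβ s, hb s, by simp⟩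
              · obtain ⟨β', b', h1, h2, h3⟩ := hy1 j (by
                  have : (j : ℕ) ≠ r := fun hh => hji (Fin.ext hh)
                  omega)
                exact ⟨β', b', h1, h2, by rwa [Function.update_of_ne hji]⟩
            · intro j hj
              have hji : j ≠ i := by
                intro hh; subst hh; simp [hi] at hj
              obtain ⟨m', rest⟩ := hy2 j (by omega)
              exact ⟨m', by rwa [Function.update_of_ne hji]⟩
        _ = (M.mbSet B).toReal := by rw [← Finset.sum_mul, ht1, one_mul]
    · refine ih y (fun i hi => absurd (lt_of_le_of_lt hi i.isLt) (by omega)) ?_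
      intro i _
      exact hy2 i (by have := i.isLt; omega)

lemma key (hB : M.mbSet B < ⊤) (k N : ℕ) (hN : 0 < N) (v : Fin N → E) (hv : ∀ j, v j ∈ B)
    (a : Fin k → Fin N → ℂ) (ha : ∀ i, ∑ j, ‖a i j‖ ≤ 1) :
    M.toFun k (fun i => ∑ j, a i j • v j) ≤ (M.mbSet B).toReal := by
  classical
  refine M.expand hB k k _ (fun i hi => absurd hi (by simp [i.isLt.not_ge])) ?_
  intro i _
  refine ⟨N + 1, Fin.snoc (fun j => ‖a i j‖) (1 - ∑ j, ‖a i j‖),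
    Fin.snoc (fun j => if a i j = 0 then 0 else a i j / ‖a i j‖) 0,
    Fin.snoc v (v ⟨0, hN⟩), ?_, ?_, ?_, ?_, ?_⟩
  · intro s
    induction s using Fin.lastCases with
    | last => simp only [Fin.snoc_last]; linarith [ha i]
    | cast j => simp [Fin.snoc_castSucc]
  · rw [Fin.sum_univ_castSucc]
    simp only [Fin.snoc_castSucc, Fin.snoc_last]
    ring
  · intro s
    induction s using Fin.lastCases with
    | last => simp
    | cast j =>
      simp only [Fin.snoc_castSucc]
      split
      · simp
      · rename_i hne
        rw [norm_div]
        rw [Complex.norm_real, Real.norm_eq_abs, abs_of_nonneg (norm_nonneg _)]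
        rw [div_self (norm_ne_zero_iff.mpr hne)]
  · intro s
    induction s using Fin.lastCases with
    | last => simp only [Fin.snoc_last]; exact hv _
    | cast j => simp only [Fin.snoc_castSucc]; exact hv j
  · rw [Fin.sum_univ_castSucc]
    simp only [Fin.snoc_castSucc, Fin.snoc_last]
    rw [zero_smul, smul_zero, add_zero]
    refine Finset.sum_congr rfl fun j _ => ?_
    by_cases hz : a i j = 0
    · simp [hz]
    · rw [if_neg hz]
      rw [← smul_assoc, Complex.real_smul, mul_comm,
        div_mul_cancel₀ _ (Complex.ofReal_ne_zero.mpr (norm_ne_zero_iff.mpr hz))]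

end KeyEstimate


section Operator

variable [CompleteSpace E] {B : Set E}

/-- Norm of elements of a multi-bounded set. -/
lemma norm_le_of_mem (hB : M.mbSet B < ⊤) {u : E} (hu : u ∈ B) :
    ‖u‖ ≤ (M.mbSet B).toReal := by
  have := M.tuple_le hB 1 (fun _ => u) (fun _ => hu)
  rwa [M.level_one] at this

lemma summable_aux (hB : M.mbSet B < ⊤) (x : ℕ → E) (hx : ∀ n, x n ∈ B)
    (a : lp (fun _ : ℕ => ℂ) 1) : Summable (fun n => (a : ∀ _ : ℕ, ℂ) n • x n) := by
  have hs : Summable (fun n => ‖(a : ∀ _ : ℕ, ℂ) n‖) := by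
    have := (lp.memℓp a).summable (by simp : (0:ℝ) < (1 : ℝ≥0∞).toReal)
    simpa using this
  refine Summable.of_norm_bounded (g := fun n => (M.mbSet B).toReal * ‖(a : ∀ _ : ℕ, ℂ) n‖)
    (hs.mul_left _) fun n => ?_
  rw [norm_smul, mul_comm]
  exact mul_le_mul_of_nonneg_right (M.norm_le_of_mem hB (hx n)) (norm_nonneg _)

lemma tsum_norm_eq (a : lp (fun _ : ℕ => ℂ) 1) :
    ∑' n, ‖(a : ∀ _ : ℕ, ℂ) n‖ = ‖a‖ := by
  have := lp.hasSum_norm (by simp : (0:ℝ) < (1 : ℝ≥0∞).toReal) a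
  simp only [ENNReal.toReal_one, Real.rpow_one] at this
  exact this.tsum_eq

/-- The operator `ℓ¹ → E` determined by a sequence in a multi-bounded set. -/
noncomputable def opOf (hB : M.mbSet B < ⊤) (x : ℕ → E) (hx : ∀ n, x n ∈ B) :
    lp (fun _ : ℕ => ℂ) 1 →L[ℂ] E :=
  LinearMap.mkContinuous
    { toFun := fun a => ∑' n, (a : ∀ _ : ℕ, ℂ) n • x n
      map_add' := by
        intro a b
        rw [← Summable.tsum_add (M.summable_aux hB x hx a) (M.summable_aux hB x hx b)]
        refine tsum_congr fun n => ?_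
        rw [lp.coeFn_add, Pi.add_apply, add_smul]
      map_smul' := by
        intro c a
        rw [RingHom.id_apply, ← Summable.tsum_const_smul c (M.summable_aux hB x hx a)]
        refine tsum_congr fun n => ?_
        rw [lp.coeFn_smul, Pi.smul_apply, smul_eq_mul, smul_smul] }
    (M.mbSet B).toReal
    (by
      intro a
      refine (norm_tsum_le_tsum_norm ?_).trans ?_
      · refine Summable.of_norm_bounded (g := fun n => (M.mbSet B).toReal * ‖(a : ∀ _ : ℕ, ℂ) n‖)
          (((lp.memℓp a).summable (by simp)).congr (by simp) |>.mul_left _) fun n => ?_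
        · rw [norm_norm, norm_smul, mul_comm]
          exact mul_le_mul_of_nonneg_right (M.norm_le_of_mem hB (hx n)) (norm_nonneg _)
      · rw [← tsum_norm_eq a, ← tsum_mul_left]
        refine Summable.tsum_le_tsum (fun n => ?_) ?_ ?_
        · rw [norm_smul, mul_comm]
          exact mul_le_mul_of_nonneg_right (M.norm_le_of_mem hB (hx n)) (norm_nonneg _)
        · refine Summable.of_norm_bounded (g := fun n => (M.mbSet B).toReal * ‖(a : ∀ _ : ℕ, ℂ) n‖)
            ((((lp.memℓp a).summable (by simp)).congr (by simp)).mul_left _) fun n => ?_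
          rw [norm_norm, norm_smul, mul_comm]
          exact mul_le_mul_of_nonneg_right (M.norm_le_of_mem hB (hx n)) (norm_nonneg _)
        · exact (((lp.memℓp a).summable (by simp)).congr (by simp)).mul_left _)

lemma opOf_single (hB : M.mbSet B < ⊤) (x : ℕ → E) (hx : ∀ n, x n ∈ B) (n : ℕ) :
    M.opOf hB x hx (lp.single 1 n (1 : ℂ)) = x n := by
  show (∑' m, ((lp.single 1 n (1:ℂ) : lp (fun _ : ℕ => ℂ) 1) : ∀ _ : ℕ, ℂ) m • x m) = x n
  rw [tsum_eq_single n]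
  · rw [lp.single_apply_self, one_smul]
  · intro m hm
    rw [lp.single_apply_ne 1 n _ hm, zero_smul]

lemma norm_single_one (n : ℕ) : ‖(lp.single 1 n (1 : ℂ) : lp (fun _ : ℕ => ℂ) 1)‖ = 1 := by
  have := lp.norm_single (p := 1) (E := fun _ : ℕ => ℂ) (by simp) n (1:ℂ)
  simpa using this

lemma opOf_multibound (hB : M.mbSet B < ⊤) (x : ℕ → E) (hx : ∀ n, x n ∈ B)
    (k : ℕ) (a : Fin k → lp (fun _ : ℕ => ℂ) 1) (hsup : (⨆ i, ‖a i‖) ≤ 1) :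
    M.toFun k (fun i => M.opOf hB x hx (a i)) ≤ (M.mbSet B).toReal := by
  classical
  have ha1 : ∀ i, ‖a i‖ ≤ 1 := by
    intro i
    exact le_trans (le_ciSup (f := fun i => ‖a i‖) (Set.Finite.bddAbove (Set.finite_range _)) i) hsup
  -- partial sums bound
  have hpart : ∀ N : ℕ, 0 < N →
      M.toFun k (fun i => ∑ j : Fin N, ((a i : ∀ _ : ℕ, ℂ) j) • x j) ≤ (M.mbSet B).toReal := by
    intro N hN
    refine M.key hB k N hN (fun j => x j) (fun j => hx _) (fun i j => (a i : ∀ _ : ℕ, ℂ) j)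
      fun i => ?_
    have hsum : Summable (fun n => ‖(a i : ∀ _ : ℕ, ℂ) n‖) :=
      ((lp.memℓp (a i)).summable (by simp)).congr (by simp)
    calc ∑ j : Fin N, ‖(a i : ∀ _ : ℕ, ℂ) j‖
        = ∑ j ∈ Finset.range N, ‖(a i : ∀ _ : ℕ, ℂ) j‖ := Fin.sum_univ_eq_sum_range (fun n => ‖(a i : ∀ _ : ℕ, ℂ) n‖) N
      _ ≤ ∑' n, ‖(a i : ∀ _ : ℕ, ℂ) n‖ := Summable.sum_le_tsum _ (fun _ _ => norm_nonneg _) hsum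
      _ = ‖a i‖ := tsum_norm_eq (a i)
      _ ≤ 1 := ha1 i
  -- convergence of partial sums
  have htend : Filter.Tendsto
      (fun N => ∑ i : Fin k, ‖M.opOf hB x hx (a i) - ∑ j : Fin N, ((a i : ∀ _ : ℕ, ℂ) j) • x j‖)
      Filter.atTop (nhds 0) := by
    have : ∀ i : Fin k, Filter.Tendsto
        (fun N => ‖M.opOf hB x hx (a i) - ∑ j : Fin N, ((a i : ∀ _ : ℕ, ℂ) j) • x j‖)
        Filter.atTop (nhds 0) := by
      intro i
      have hTa : M.opOf hB x hx (a i) = ∑' n, ((a i : ∀ _ : ℕ, ℂ) n) • x n := rfl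
      have hconv := ((M.summable_aux hB x hx (a i)).hasSum).tendsto_sum_nat
      have h2 : Filter.Tendsto
          (fun N => M.opOf hB x hx (a i) - ∑ j ∈ Finset.range N, ((a i : ∀ _ : ℕ, ℂ) j) • x j)
          Filter.atTop (nhds 0) := by
        have := Filter.Tendsto.const_sub (M.opOf hB x hx (a i)) hconv
        simpa [hTa, sub_self] using this
      have h3 := h2.norm
      rw [norm_zero] at h3
      refine h3.congr fun N => ?_
      rw [Fin.sum_univ_eq_sum_range (fun j => ((a i : ∀ _ : ℕ, ℂ) j) • x j) N]
    have hsumtend := tendsto_finset_sum (Finset.univ : Finset (Fin k))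
      (fun i _ => this i)
    simpa using hsumtend
  -- combine
  have hbound : ∀ᶠ N in Filter.atTop,
      M.toFun k (fun i => M.opOf hB x hx (a i)) ≤
        (M.mbSet B).toReal +
          ∑ i : Fin k, ‖M.opOf hB x hx (a i) - ∑ j : Fin N, ((a i : ∀ _ : ℕ, ℂ) j) • x j‖ := by
    filter_upwards [Filter.eventually_ge_atTop 1] with N hN
    calc M.toFun k (fun i => M.opOf hB x hx (a i))
        ≤ M.toFun k (fun i => ∑ j : Fin N, ((a i : ∀ _ : ℕ, ℂ) j) • x j) +
            ∑ i : Fin k, ‖M.opOf hB x hx (a i) - ∑ j : Fin N, ((a i : ∀ _ : ℕ, ℂ) j) • x j‖ :=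
          M.le_add_sum_norm k _ _
      _ ≤ _ := by
          have := hpart N (by omega)
          linarith
  have hlim : Filter.Tendsto
      (fun N => (M.mbSet B).toReal +
        ∑ i : Fin k, ‖M.opOf hB x hx (a i) - ∑ j : Fin N, ((a i : ∀ _ : ℕ, ℂ) j) • x j‖)
      Filter.atTop (nhds ((M.mbSet B).toReal + 0)) :=
    Filter.Tendsto.const_add _ htend
  have := ge_of_tendsto hlim hbound
  simpa using this

end Operator

end MultiNorm



namespace NormedSpace
abbrev Dual (𝕜 : Type*) (E : Type*) [NontriviallyNormedField 𝕜] [SeminormedAddCommGroup E]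
    [NormedSpace 𝕜 E] : Type _ := E →L[𝕜] 𝕜
end NormedSpace

section Norming
variable {E : Type*} [NormedAddCommGroup E] [NormedSpace ℂ E]

lemma exists_norming_finset (s : Finset (Dual ℂ (Dual ℂ E))) :
    ∃ D : Finset (Dual ℂ E), (∀ f ∈ D, ‖f‖ ≤ 1) ∧
      ∀ Ψ ∈ Submodule.span ℂ (s : Set (Dual ℂ (Dual ℂ E))), ∃ f ∈ D, ‖Ψ‖ ≤ 2 * ‖Ψ f‖ := by
  classical
  set V := Submodule.span ℂ (s : Set (Dual ℂ (Dual ℂ E))) with hV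
  have : FiniteDimensional ℂ V := FiniteDimensional.span_finset ℂ s
  haveI : ProperSpace V := FiniteDimensional.proper ℂ V
  set Sph : Set V := Metric.sphere 0 1 with hSph
  have hcpt : IsCompact Sph := isCompact_sphere 0 1
  set U : {f : Dual ℂ E // ‖f‖ ≤ 1} → Set V :=
    fun f => {ψ | 3/4 < ‖(ψ : Dual ℂ (Dual ℂ E)) f.1‖} with hU
  have hUopen : ∀ f, IsOpen (U f) := by
    intro f
    have hcont : Continuous fun ψ : V => ‖(ψ : Dual ℂ (Dual ℂ E)) f.1‖ :=
      ((ContinuousLinearMap.apply ℂ ℂ f.1).continuous.comp continuous_subtype_val).norm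
    exact isOpen_lt continuous_const hcont
  have hcover : Sph ⊆ ⋃ f, U f := by
    intro ψ hψ
    have hnorm : ‖(ψ : Dual ℂ (Dual ℂ E))‖ = 1 := by
      rw [hSph] at hψ
      exact (Submodule.norm_coe ψ).trans ((mem_sphere_zero_iff_norm (E := V)).1 hψ)
    have h34 : (3/4 : ℝ) < ‖(ψ : Dual ℂ (Dual ℂ E))‖ := by rw [hnorm]; norm_num
    obtain ⟨f, hf1, hf2⟩ := ContinuousLinearMap.exists_lt_apply_of_lt_opNorm _ h34
    exact Set.mem_iUnion.2 ⟨⟨f, hf1.le⟩, hf2⟩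
  obtain ⟨t, ht⟩ := hcpt.elim_finite_subcover U hUopen hcover
  refine ⟨insert 0 (t.image Subtype.val), ?_, ?_⟩
  · intro f hf
    rcases Finset.mem_insert.1 hf with rfl | hf
    · simp
    · obtain ⟨g, _, rfl⟩ := Finset.mem_image.1 hf
      exact g.2
  · intro Ψ hΨ
    by_cases hz : Ψ = 0
    · exact ⟨0, Finset.mem_insert_self _ _, by simp [hz]⟩
    · have hn0 : (0:ℝ) < ‖Ψ‖ := by
        rcases (norm_nonneg Ψ).lt_or_eq with h | h
        · exact h
        · exact absurd ((ContinuousLinearMap.opNorm_zero_iff Ψ).1 h.symm) hz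
      set ψ : V := ((‖Ψ‖⁻¹ : ℝ) : ℂ) • ⟨Ψ, hΨ⟩ with hψdef
      have hcoe : (ψ : Dual ℂ (Dual ℂ E)) = ((‖Ψ‖⁻¹ : ℝ) : ℂ) • Ψ := rfl
      have hψs : ψ ∈ Sph := by
        have : ‖(ψ : Dual ℂ (Dual ℂ E))‖ = 1 := by
          rw [hcoe, norm_smul]
          simp [abs_of_nonneg (inv_nonneg.2 hn0.le), inv_mul_cancel₀ hn0.ne']
        rw [hSph]
        exact (mem_sphere_zero_iff_norm (E := V)).2 ((Submodule.norm_coe ψ).symm.trans this)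
      obtain ⟨f, hft, hfU⟩ := Set.mem_iUnion₂.1 (ht hψs)
      have hval : (3/4 : ℝ) < ‖Ψ‖⁻¹ * ‖Ψ f.1‖ := by
        have heval : (ψ : Dual ℂ (Dual ℂ E)) f.1 = ((‖Ψ‖⁻¹ : ℝ) : ℂ) • Ψ f.1 := by rw [hcoe]; rfl
        have hfU' : (3/4 : ℝ) < ‖(ψ : Dual ℂ (Dual ℂ E)) f.1‖ := hfU
        rw [heval, norm_smul, Complex.norm_real, Real.norm_eq_abs,
          abs_of_nonneg (inv_nonneg.2 hn0.le)] at hfU'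
        exact hfU'
      refine ⟨f.1, Finset.mem_insert_of_mem (Finset.mem_image_of_mem _ hft), ?_⟩
      have h2 : ‖Ψ‖ * (3/4) < ‖Ψ‖ * (‖Ψ‖⁻¹ * ‖Ψ f.1‖) := mul_lt_mul_of_pos_left hval hn0
      have h3 : ‖Ψ‖ * (‖Ψ‖⁻¹ * ‖Ψ f.1‖) = ‖Ψ f.1‖ := by
        rw [← mul_assoc, mul_inv_cancel₀ hn0.ne', one_mul]
      rw [h3] at h2
      linarith [norm_nonneg (Ψ f.1)]
end Norming

section BuildSeq
variable {α : Type*}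

noncomputable def buildSeq (G : List α → α) : ℕ → List α
  | 0 => []
  | n + 1 => buildSeq G n ++ [G (buildSeq G n)]

lemma buildSeq_length (G : List α → α) (n : ℕ) : (buildSeq G n).length = n := by
  induction n with
  | zero => rfl
  | succ n ih => simp [buildSeq, ih]

lemma buildSeq_take (G : List α → α) {m n : ℕ} (h : m ≤ n) :
    (buildSeq G n).take m = buildSeq G m := by
  induction n with
  | zero => simp_all [buildSeq]
  | succ n ih =>
    rcases Nat.lt_or_ge m (n+1) with hm | hm
    · rw [buildSeq, List.take_append_of_le_length (by rw [buildSeq_length]; omega)]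
      exact ih (by omega)
    · have : m = n + 1 := by omega
      subst this
      rw [List.take_of_length_le (by simp [buildSeq_length, buildSeq])]

lemma buildSeq_mem (G : List α → α) {n : ℕ} {a : α} (ha : a ∈ buildSeq G n) :
    ∃ m, m < n ∧ a = G (buildSeq G m) := by
  induction n with
  | zero => simp [buildSeq] at ha
  | succ n ih =>
    rw [buildSeq, List.mem_append] at ha
    rcases ha with ha | ha
    · obtain ⟨m, hm, rfl⟩ := ih ha
      exact ⟨m, by omega, rfl⟩
    · simp at ha
      exact ⟨n, by omega, ha⟩

lemma buildSeq_mem_of_lt (G : List α → α) {m n : ℕ} (h : m < n) :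
    G (buildSeq G m) ∈ buildSeq G n := by
  induction n with
  | zero => omega
  | succ n ih =>
    rw [buildSeq, List.mem_append]
    rcases Nat.lt_or_ge m n with hm | hm
    · exact Or.inl (ih hm)
    · have : m = n := by omega
      subst this
      simp
end BuildSeq


section ES
variable {E : Type*} [NormedAddCommGroup E] [NormedSpace ℂ E]

noncomputable def jwMap (E : Type*) [NormedAddCommGroup E] [NormedSpace ℂ E] :
    WeakSpace ℂ E → WeakDual ℂ (Dual ℂ E) :=
  fun z => StrongDual.toWeakDual (inclusionInDoubleDual ℂ E ((toWeakSpace ℂ E).symm z))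

lemma jwMap_inducing : IsInducing (jwMap E) := by
  constructor
  show TopologicalSpace.induced _ Pi.topologicalSpace =
    TopologicalSpace.induced (jwMap E) (TopologicalSpace.induced _ Pi.topologicalSpace)
  erw [induced_compose]
  rfl

theorem isCompact_closure_of_seq_clusterPt (B : Set E) (C : ℝ) (hC : ∀ b ∈ B, ‖b‖ ≤ C)
    (hcl : ∀ x : ℕ → E, (∀ n, x n ∈ B) →
      ∃ z : WeakSpace ℂ E, MapClusterPt z atTop (fun n => toWeakSpace ℂ E (x n))) :
    IsCompact (closure (toWeakSpace ℂ E '' B)) := by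
  classical
  set J : E →L[ℂ] Dual ℂ (Dual ℂ E) := inclusionInDoubleDual ℂ E with hJ
  have hJnorm : ∀ b : E, ‖J b‖ = ‖b‖ := fun b => (inclusionInDoubleDualLi ℂ).norm_map b
  have hJapp : ∀ (b : E) (f : Dual ℂ E), J b f = f b := fun b f => rfl
  set A : Set (WeakDual ℂ (Dual ℂ E)) := jwMap E '' (toWeakSpace ℂ E '' B) with hA
  -- compactness of the closure of A
  have hKc : IsCompact (closure A) := by
    have hball : IsCompact (WeakDual.toStrongDual ⁻¹'
        Metric.closedBall (0 : Dual ℂ (Dual ℂ E)) C) := WeakDual.isCompact_closedBall 0 C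
    have hAS : A ⊆ WeakDual.toStrongDual ⁻¹' Metric.closedBall (0 : Dual ℂ (Dual ℂ E)) C := by
      rintro _ ⟨_, ⟨b, hbB, rfl⟩, rfl⟩
      simp only [Set.mem_preimage, Metric.mem_closedBall, dist_zero_right]
      show dist (J ((toWeakSpace ℂ E).symm (toWeakSpace ℂ E b))) 0 ≤ C
      refine (dist_zero_right _).le.trans ?_
      rw [LinearEquiv.symm_apply_apply, hJnorm]
      exact hC b hbB
    exact hball.of_isClosed_subset isClosed_closure
      (closure_minimal hAS hball.isClosed)
  -- the closure of A lies in the range of jwMap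
  have hrange : closure A ⊆ Set.range (jwMap E) := by
    intro Φ hΦ
    choose DS hDS1 hDS2 using (exists_norming_finset (E := E))
    set Φn : Dual ℂ (Dual ℂ E) := WeakDual.toStrongDual Φ with hΦn
    set Fs : List E → Finset (Dual ℂ (Dual ℂ E)) :=
      fun l => insert Φn (l.map (fun b => J b)).toFinset with hFs
    set hist : List E → Finset (Dual ℂ E) :=
      fun l => (Finset.range (l.length + 1)).biUnion (fun m => DS (Fs (l.take m))) with hhist
    have approx : ∀ (s : Finset (Dual ℂ E)) (ε : ℝ), 0 < ε →
        ∃ b, b ∈ B ∧ ∀ f ∈ s, ‖Φ f - f b‖ < ε := by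
      intro s ε hε
      set U : Set (WeakDual ℂ (Dual ℂ E)) := ⋂ f ∈ s, {Ψ | ‖Ψ f - Φ f‖ < ε} with hUdef
      have hUopen : IsOpen U := by
        refine isOpen_biInter_finset fun f _ => ?_
        have hcont : Continuous fun Ψ : WeakDual ℂ (Dual ℂ E) => ‖Ψ f - Φ f‖ :=
          ((WeakBilin.eval_continuous _ f).sub continuous_const).norm
        exact isOpen_lt hcont continuous_const
      have hΦU : Φ ∈ U := by
        refine Set.mem_iInter₂.2 fun f _ => ?_
        simpa using hε
      obtain ⟨w, hwU, hwA⟩ := _root_.mem_closure_iff.1 hΦ U hUopen hΦU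
      obtain ⟨_, ⟨b, hbB, rfl⟩, rfl⟩ := hwA
      refine ⟨b, hbB, fun f hf => ?_⟩
      have hmem := Set.mem_iInter₂.1 hwU f hf
      simp only [Set.mem_setOf_eq] at hmem
      have heq : jwMap E (toWeakSpace ℂ E b) f = f b := by
        show J ((toWeakSpace ℂ E).symm (toWeakSpace ℂ E b)) f = f b
        rw [LinearEquiv.symm_apply_apply]
        exact hJapp b f
      rw [heq] at hmem
      rw [norm_sub_rev]
      exact hmem
    set G : List E → E :=
      fun l => Classical.choose (approx (hist l) (1 / (l.length + 1)) (by positivity)) with hGdef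
    have hG : ∀ l : List E, G l ∈ B ∧
        ∀ f ∈ hist l, ‖Φ f - f (G l)‖ < 1 / (l.length + 1) :=
      fun l => Classical.choose_spec (approx (hist l) (1 / (l.length + 1)) (by positivity))
    set seq : ℕ → E := fun n => G (buildSeq G n) with hseq
    have hseqB : ∀ n, seq n ∈ B := fun n => (hG _).1
    have hseq2 : ∀ n, ∀ f ∈ hist (buildSeq G n), ‖Φ f - f (seq n)‖ < 1 / (n + 1) := by
      intro n f hf
      have := (hG (buildSeq G n)).2 f hf
      rwa [buildSeq_length] at this
    have hmem_hist : ∀ m n, m ≤ n → ∀ f ∈ DS (Fs (buildSeq G m)), f ∈ hist (buildSeq G n) := by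
      intro m n hmn f hf
      refine Finset.mem_biUnion.2 ⟨m, Finset.mem_range.2 (by rw [buildSeq_length]; omega), ?_⟩
      rwa [buildSeq_take G hmn]
    have htend : ∀ m, ∀ f ∈ DS (Fs (buildSeq G m)),
        Tendsto (fun n => f (seq n)) atTop (𝓝 (Φ f)) := by
      intro m f hf
      have hsq : Tendsto (fun n : ℕ => ‖f (seq n) - Φ f‖) atTop (𝓝 0) := by
        refine squeeze_zero' (Eventually.of_forall fun n => norm_nonneg _) ?_
          tendsto_one_div_add_atTop_nhds_zero_nat
        filter_upwards [eventually_ge_atTop m] with n hn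
        rw [norm_sub_rev]
        exact (hseq2 n f (hmem_hist m n hn f hf)).le
      rw [tendsto_iff_norm_sub_tendsto_zero]
      exact hsq
    obtain ⟨z, hz⟩ := hcl seq hseqB
    set x : E := (toWeakSpace ℂ E).symm z with hx
    -- agreement of Φ and J x on all the norming functionals
    have hagree : ∀ m, ∀ f ∈ DS (Fs (buildSeq G m)), Φ f = f x := by
      intro m f hf
      have hcont : Continuous (fun w : WeakSpace ℂ E => f ((toWeakSpace ℂ E).symm w)) :=
        WeakBilin.eval_continuous _ f
      have hclu : MapClusterPt (f x) atTop (fun n => f (seq n)) := by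
        have h2 := MapClusterPt.continuousAt_comp (hcont.continuousAt) hz
        exact h2
      have hne : (𝓝 (f x) ⊓ 𝓝 (Φ f)).NeBot :=
        Filter.NeBot.mono hclu.clusterPt.neBot
          (inf_le_inf_left _ (htend m f hf))
      exact (eq_of_nhds_neBot hne).symm
    -- x lies in the norm-closure of the span of the sequence
    have hxV : x ∈ closure ((Submodule.span ℂ (Set.range seq) : Submodule ℂ E) : Set E) := by
      have h1 : z ∈ closure (Set.range (fun n => toWeakSpace ℂ E (seq n))) :=
        mem_closure_iff_clusterPt.2 (hz.clusterPt.mono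
          (le_principal_iff.2 range_mem_map))
      have h2 : z ∈ closure (toWeakSpace ℂ E ''
          ((Submodule.span ℂ (Set.range seq) : Submodule ℂ E) : Set E)) := by
        refine closure_mono ?_ h1
        rintro _ ⟨n, rfl⟩
        exact ⟨seq n, Submodule.subset_span ⟨n, rfl⟩, rfl⟩
      have hconv : Convex ℝ ((Submodule.span ℂ (Set.range seq) : Submodule ℂ E) : Set E) :=
        ((Submodule.span ℂ (Set.range seq)).restrictScalars ℝ).convex
      rw [← hconv.toWeakSpace_closure (𝕜 := ℂ)] at h2
      obtain ⟨x', hx'cl, hx'z⟩ := h2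
      have : x = x' := by rw [hx, ← hx'z, LinearEquiv.symm_apply_apply]
      rwa [this]
    -- the difference functional vanishes
    set W : Submodule ℂ (Dual ℂ (Dual ℂ E)) :=
      Submodule.span ℂ ({Φn} ∪ (J '' Set.range seq)) with hW
    set Dinf : Set (Dual ℂ E) := ⋃ n, (DS (Fs (buildSeq G n)) : Set (Dual ℂ E)) with hDinf
    set g : Dual ℂ (Dual ℂ E) → ℝ := fun Ξ => ⨆ f : Dinf, ‖Ξ f.1‖ with hg
    have hgbdd : ∀ Ξ : Dual ℂ (Dual ℂ E), ∀ f : Dinf, ‖Ξ f.1‖ ≤ ‖Ξ‖ := by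
      intro Ξ f
      obtain ⟨n, hn⟩ := Set.mem_iUnion.1 f.2
      have h1 : ‖f.1‖ ≤ 1 := hDS1 _ f.1 hn
      calc ‖Ξ f.1‖ ≤ ‖Ξ‖ * ‖f.1‖ := Ξ.le_opNorm f.1
        _ ≤ ‖Ξ‖ * 1 := by gcongr
        _ = ‖Ξ‖ := mul_one _
    have hg0 : ∀ Ξ, 0 ≤ g Ξ := fun Ξ => Real.iSup_nonneg fun f => norm_nonneg _
    have hgBdd : ∀ Ξ : Dual ℂ (Dual ℂ E), BddAbove (Set.range fun f : Dinf => ‖Ξ f.1‖) :=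
      fun Ξ => ⟨‖Ξ‖, by rintro _ ⟨f, rfl⟩; exact hgbdd Ξ f⟩
    have hglip : ∀ Ξ Ξ' : Dual ℂ (Dual ℂ E), g Ξ ≤ g Ξ' + ‖Ξ - Ξ'‖ := by
      intro Ξ Ξ'
      refine Real.iSup_le (fun f => ?_) (add_nonneg (hg0 _) (norm_nonneg _))
      have h1 : ‖Ξ f.1‖ ≤ ‖Ξ' f.1‖ + ‖(Ξ - Ξ') f.1‖ := by
        have : Ξ f.1 = Ξ' f.1 + (Ξ - Ξ') f.1 := by
          simp [ContinuousLinearMap.sub_apply]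
        rw [this]
        exact norm_add_le _ _
      have h2 : ‖Ξ' f.1‖ ≤ g Ξ' := le_ciSup (hgBdd Ξ') f
      have h3 : ‖(Ξ - Ξ') f.1‖ ≤ ‖Ξ - Ξ'‖ := hgbdd _ f
      linarith
    -- norming inequality on W
    have hWnorm : ∀ Ξ ∈ W, ‖Ξ‖ ≤ 2 * g Ξ := by
      intro Ξ hΞ
      have hFsmono : ∀ m n : ℕ, m ≤ n → Fs (buildSeq G m) ⊆ Fs (buildSeq G n) := by
        intro m n hmn ψ hψ
        rcases Finset.mem_insert.1 hψ with rfl | hψ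
        · exact Finset.mem_insert_self _ _
        · refine Finset.mem_insert_of_mem ?_
          rw [List.mem_toFinset] at hψ ⊢
          obtain ⟨b, hb, rfl⟩ := List.mem_map.1 hψ
          obtain ⟨p, hp, rfl⟩ := buildSeq_mem G hb
          exact List.mem_map.2 ⟨_, buildSeq_mem_of_lt G (by omega), rfl⟩
      have hdir : Directed (· ≤ ·)
          (fun n => Submodule.span ℂ ((Fs (buildSeq G n) : Set (Dual ℂ (Dual ℂ E))))) := by
        intro m n
        refine ⟨max m n, Submodule.span_mono ?_, Submodule.span_mono ?_⟩
        · exact_mod_cast hFsmono m (max m n) (le_max_left _ _)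
        · exact_mod_cast hFsmono n (max m n) (le_max_right _ _)
      have hWle : W ≤ ⨆ n, Submodule.span ℂ ((Fs (buildSeq G n) : Set (Dual ℂ (Dual ℂ E)))) := by
        rw [hW, Submodule.span_le]
        rintro ψ (rfl | ⟨b, ⟨n, rfl⟩, rfl⟩)
        · exact Submodule.mem_iSup_of_mem 0
            (Submodule.subset_span (Finset.mem_coe.2 (Finset.mem_insert_self _ _)))
        · refine Submodule.mem_iSup_of_mem (n+1) (Submodule.subset_span (Finset.mem_coe.2 ?_))
          refine Finset.mem_insert_of_mem (List.mem_toFinset.2 ?_)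
          exact List.mem_map.2 ⟨_, buildSeq_mem_of_lt G (by omega), rfl⟩
      obtain ⟨n, hn⟩ := (Submodule.mem_iSup_of_directed _ hdir).1 (hWle hΞ)
      obtain ⟨f, hfDS, hfle⟩ := hDS2 (Fs (buildSeq G n)) Ξ hn
      refine hfle.trans ?_
      have : ‖Ξ f‖ ≤ g Ξ :=
        le_ciSup (hgBdd Ξ) (⟨f, Set.mem_iUnion.2 ⟨n, hfDS⟩⟩ : Dinf)
      linarith
    -- Ψ := Φn - J x belongs to the closure of W
    have hΞ0cl : Φn - J x ∈ closure (W : Set (Dual ℂ (Dual ℂ E))) := by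
      have hJx : J x ∈ closure (W : Set (Dual ℂ (Dual ℂ E))) := by
        have h1 : J x ∈ closure (⇑J ''
            ((Submodule.span ℂ (Set.range seq) : Submodule ℂ E) : Set E)) :=
          image_closure_subset_closure_image J.continuous ⟨x, hxV, rfl⟩
        refine closure_mono ?_ h1
        intro ξ hξ
        have : ξ ∈ Submodule.map (J : E →ₗ[ℂ] Dual ℂ (Dual ℂ E)) (Submodule.span ℂ (Set.range seq)) := hξ
        rw [Submodule.map_span] at this
        exact Submodule.span_mono (Set.subset_union_right) this
      have hΦW : Φn ∈ closure (W : Set (Dual ℂ (Dual ℂ E))) :=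
        subset_closure (Submodule.subset_span (Or.inl rfl))
      have : Φn - J x ∈ W.topologicalClosure := by
        exact Submodule.sub_mem _ hΦW hJx
      exact this
    have hgΞ0 : g (Φn - J x) = 0 := by
      refine le_antisymm (Real.iSup_le (fun f => ?_) le_rfl) (hg0 _)
      obtain ⟨n, hn⟩ := Set.mem_iUnion.1 f.2
      have h1 : Φn f.1 = f.1 x := hagree n f.1 hn
      have h2 : (Φn - J x) f.1 = Φn f.1 - J x f.1 := rfl
      rw [h2, hJapp, h1, sub_self, norm_zero]
    have hnorm0 : ‖Φn - J x‖ ≤ 0 := by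
      have key : ∀ ε : ℝ, 0 < ε → ‖Φn - J x‖ ≤ 0 + 3 * ε := by
        intro ε hε
        obtain ⟨ξ, hξW, hd⟩ := Metric.mem_closure_iff.1 hΞ0cl ε hε
        have hd' : ‖Φn - J x - ξ‖ < ε := by rwa [dist_eq_norm] at hd
        have h1 : ‖Φn - J x‖ ≤ ‖ξ‖ + ‖Φn - J x - ξ‖ := by
          calc ‖Φn - J x‖ = ‖ξ + (Φn - J x - ξ)‖ := by rw [add_sub_cancel]
            _ ≤ ‖ξ‖ + ‖Φn - J x - ξ‖ := norm_add_le _ _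
        have h2 : ‖ξ‖ ≤ 2 * g ξ := hWnorm ξ hξW
        have h3 : g ξ ≤ g (Φn - J x) + ‖ξ - (Φn - J x)‖ := hglip _ _
        have h4 : ‖ξ - (Φn - J x)‖ = ‖Φn - J x - ξ‖ := norm_sub_rev _ _
        rw [hgΞ0] at h3
        linarith
      have := le_of_forall_pos_le_add (a := ‖Φn - J x‖) (b := 0) ?_
      · exact this
      · intro ε hε
        have := key (ε/3) (by positivity)
        linarith
    have hfinal : Φn = J x := by
      have : ‖Φn - J x‖ = 0 := le_antisymm hnorm0 (norm_nonneg _)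
      have h0 : Φn - J x = 0 := (ContinuousLinearMap.opNorm_zero_iff _).1 this
      rw [sub_eq_zero] at h0
      exact h0
    refine ⟨toWeakSpace ℂ E x, ?_⟩
    show StrongDual.toWeakDual (J ((toWeakSpace ℂ E).symm (toWeakSpace ℂ E x))) = Φ
    rw [LinearEquiv.symm_apply_apply, ← hfinal, hΦn]
    exact (StrongDual.toWeakDual (𝕜 := ℂ)).apply_symm_apply Φ
  -- wrap up
  have hKpre : IsCompact (jwMap E ⁻¹' closure A) :=
    (jwMap_inducing).isCompact_preimage' hKc hrange
  refine hKpre.of_isClosed_subset isClosed_closure ?_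
  refine closure_minimal ?_ (isClosed_closure.preimage jwMap_inducing.continuous)
  intro w hw
  exact subset_closure ⟨w, hw, rfl⟩

end ES


/-- let `E` be a complex Banach space with a multi-norm, and equip ℓ¹ with
its minimum multi-norm. If every multi-bounded operator `T ∈ B(ℓ¹, E)` is weakly compact,
then every multi-bounded subset of `E` is relatively weakly compact. -/
theorem multibounded_subsets_relatively_weakly_compact
    (E : Type*) [NormedAddCommGroup E] [NormedSpace ℂ E] [CompleteSpace E] (M : MultiNorm E)
    (h : ∀ T : lp (fun _ : ℕ => ℂ) 1 →L[ℂ] E,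
      (⨆ (k : ℕ) (x : Fin k → lp (fun _ : ℕ => ℂ) 1) (_ : (⨆ i, ‖x i‖) ≤ 1),
        ENNReal.ofReal (M.toFun k fun i => T (x i))) < ⊤ →
      IsCompact (closure (toWeakSpace ℂ E '' (T '' Metric.closedBall 0 1)))) :
    ∀ B : Set E, M.mbSet B < ⊤ → IsCompact (closure (toWeakSpace ℂ E '' B)) := by
  intro B hB
  refine isCompact_closure_of_seq_clusterPt B ((M.mbSet B).toReal)
    (fun b hb => M.norm_le_of_mem hB hb) ?_
  intro x hx
  set T := M.opOf hB x hx with hT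
  have hmb : (⨆ (k : ℕ) (a : Fin k → lp (fun _ : ℕ => ℂ) 1) (_ : (⨆ i, ‖a i‖) ≤ 1),
      ENNReal.ofReal (M.toFun k fun i => T (a i))) < ⊤ := by
    have hle : (⨆ (k : ℕ) (a : Fin k → lp (fun _ : ℕ => ℂ) 1) (_ : (⨆ i, ‖a i‖) ≤ 1),
        ENNReal.ofReal (M.toFun k fun i => T (a i))) ≤
        ENNReal.ofReal ((M.mbSet B).toReal) := by
      refine iSup_le fun k => iSup_le fun a => iSup_le fun ha => ?_
      exact ENNReal.ofReal_le_ofReal (M.opOf_multibound hB x hx k a ha)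
    exact lt_of_le_of_lt hle ENNReal.ofReal_lt_top
  have hcpt := h T hmb
  have hmem : ∀ n, toWeakSpace ℂ E (x n) ∈
      closure (toWeakSpace ℂ E '' (T '' Metric.closedBall 0 1)) := by
    intro n
    refine subset_closure ⟨x n, ⟨lp.single 1 n 1, ?_, M.opOf_single hB x hx n⟩, rfl⟩
    rw [Metric.mem_closedBall, dist_zero_right, MultiNorm.norm_single_one]
  haveI : (Filter.map (fun n => toWeakSpace ℂ E (x n)) atTop).NeBot := Filter.map_neBot
  have hle2 : Filter.map (fun n => toWeakSpace ℂ E (x n)) atTop ≤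
      Filter.principal (closure (toWeakSpace ℂ E '' (T '' Metric.closedBall 0 1))) :=
    le_principal_iff.2 (Filter.mem_map.2 (Filter.Eventually.of_forall hmem))
  obtain ⟨z, _, hz⟩ := hcpt.exists_clusterPt hle2
  exact ⟨z, hz⟩
end
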